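/- Let G be a countable group and suppose there exists a finite almost normal subgroup H of G with H ∩ R(G) = {1}, where R(G) is the intersection of all finite-index subgroups of G. Let (Y,G) be a dynamical system with Y_H ≠ ∅. Then there exist a dynamical system (X,G), a factor map π : X → Y, and a constant m ≥ 1 such that π⁻¹(Y_H) ⊆ {x ∈ X : G_x = {1}} and |π⁻¹{y}| ≤ m for all y ∈ Y_H. Moreover: (1) if (Y,G) is minimal, then (X,G) is minimal and topologically free; (2) if there exists an ergodic invariant Borel probability measure μ of (Y,G) with μ(Y_H) = 1, then there exists an invariant Borel probability measure ν on X with π_*ν = μ such that (X,G,ν) is essentially free. -/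

import Mathlib

open MeasureTheory Pointwise
open scoped ENNReal

/-- The conjugate subgroup `g H g⁻¹`. -/
def conjSubgroup {G : Type*} [Group G] (g : G) (H : Subgroup G) : Subgroup G :=
  Subgroup.map (MulAut.conj g).toMonoidHom H

/-- The set `Y_H` of points of `Y` whose stabilizer is conjugate to `H`. -/
def setYH (G : Type*) {Y : Type*} [Group G] [MulAction G Y] (H : Subgroup G) : Set Y :=
  {y : Y | ∃ g : G, MulAction.stabilizer G y = conjSubgroup g H}

/-- `R(G)`: the intersection of all finite-index subgroups of `G`. -/
def residualSubgroup (G : Type*) [Group G] : Subgroup G :=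
  ⨅ (H : Subgroup G) (_ : H.FiniteIndex), H

universe u

section Aux

/-- The action of `G` on an invariant subset `M`. -/
def subAction {G : Type*} [Group G] {W : Type*} [MulAction G W] (M : Set W)
    (hMinv : ∀ (g : G), ∀ p ∈ M, g • p ∈ M) : MulAction G M where
  smul g x := ⟨g • (x : W), hMinv g _ x.2⟩
  one_smul x := Subtype.ext (one_smul G (x : W))
  mul_smul g h x := Subtype.ext (mul_smul g h (x : W))

variable {G : Type*} [Group G] [Countable G]
variable {Y : Type u} [TopologicalSpace Y] [CompactSpace Y] [T2Space Y]
  [MeasurableSpace Y] [BorelSpace Y] [MulAction G Y] [ContinuousConstSMul G Y]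
variable {Z : Type u} [TopologicalSpace Z] [DiscreteTopology Z]
  [SecondCountableTopology Z] [Fintype Z] [Nonempty Z]
  [MeasurableSpace Z] [BorelSpace Z] [MulAction G Z]

theorem core (N H : Subgroup G) (M : Set (Y × Z)) (hMcl : IsClosed M)
    (hMinv : ∀ (g : G), ∀ p ∈ M, g • p ∈ M)
    (hMsurj : ∀ y : Y, ∃ z : Z, (y, z) ∈ M)
    (hstabZ : ∀ (g : G) (z : Z), g • z = z ↔ g ∈ N)
    (hH1 : ∀ s g : G, s ∈ N → g⁻¹ * s * g ∈ H → s = 1)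
    (hne : (setYH G H : Set Y).Nonempty)
    (hminM : (∀ y : Y, Dense (MulAction.orbit G y)) →
      ∀ p ∈ M, ∀ q ∈ M, q ∈ closure (MulAction.orbit G p)) :
    ∃ (X : Type u) (_ : TopologicalSpace X) (_ : MeasurableSpace X) (_ : MulAction G X),
      CompactSpace X ∧ T2Space X ∧ BorelSpace X ∧ ContinuousConstSMul G X ∧
      ∃ (π : X → Y) (m : ℕ),
        1 ≤ m ∧
        Continuous π ∧ Function.Surjective π ∧
        (∀ (g : G) (x : X), π (g • x) = g • π x) ∧
        π ⁻¹' (setYH G H : Set Y) ⊆ {x : X | MulAction.stabilizer G x = ⊥} ∧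
        (∀ y ∈ (setYH G H : Set Y), (π ⁻¹' {y}).Finite ∧ Nat.card (π ⁻¹' {y}) ≤ m) ∧
        ((∀ y : Y, Dense (MulAction.orbit G y)) →
          (∀ x : X, Dense (MulAction.orbit G x)) ∧
          {x : X | MulAction.stabilizer G x = ⊥} ∈ residual X) ∧
        (∀ μ : Measure Y, IsProbabilityMeasure μ →
          (∀ (g : G) (A : Set Y), μ (g • A) = μ A) →
          (∀ A : Set Y, MeasurableSet A → (∀ g : G, g • A = A) → μ A = 0 ∨ μ A = 1) →
          μ (setYH G H : Set Y) = 1 →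
          ∃ ν : Measure X, IsProbabilityMeasure ν ∧
            (∀ (g : G) (A : Set X), ν (g • A) = ν A) ∧
            Measure.map π ν = μ ∧
            ν {x : X | MulAction.stabilizer G x = ⊥} = 1) := by
  classical
  haveI : ContinuousConstSMul G Z := ⟨fun g => continuous_of_discreteTopology⟩
  letI instAct : MulAction G M := subAction M hMinv
  have hsmul_val : ∀ (g : G) (x : M), ((g • x : M) : Y × Z) = g • (x : Y × Z) := fun _ _ => rfl
  haveI : CompactSpace M := isCompact_iff_compactSpace.mp hMcl.isCompact
  haveI instCS : ContinuousConstSMul G M := ⟨fun g =>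
    ((continuous_const_smul g).comp continuous_subtype_val).subtype_mk _⟩
  have hMmeas : MeasurableSet M := hMcl.measurableSet
  -- stabilizers in the subsystem
  have hstab_val : ∀ x : M, MulAction.stabilizer G x
      = MulAction.stabilizer G ((x : Y × Z).1) ⊓ MulAction.stabilizer G ((x : Y × Z).2) := by
    intro x
    ext g
    simp only [MulAction.mem_stabilizer_iff, Subgroup.mem_inf]
    constructor
    · intro h
      have h' := congrArg Subtype.val h
      rw [hsmul_val] at h'
      exact ⟨congrArg Prod.fst h', congrArg Prod.snd h'⟩
    · rintro ⟨h1, h2⟩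
      apply Subtype.ext
      rw [hsmul_val]
      exact Prod.ext h1 h2
  have hfree : ∀ x : M, ((x : Y × Z).1 ∈ setYH G H) → MulAction.stabilizer G x = ⊥ := by
    intro x hx
    obtain ⟨g, hg⟩ := hx
    rw [eq_bot_iff]
    intro s hs
    rw [hstab_val x, Subgroup.mem_inf] at hs
    obtain ⟨h1, h2⟩ := hs
    have hsN : s ∈ N := (hstabZ s _).mp h2
    rw [hg] at h1
    obtain ⟨h, hh, hch⟩ := h1
    have hsH : g⁻¹ * s * g ∈ H := by
      have hch' : g * h * g⁻¹ = s := hch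
      rw [← hch']
      have : g⁻¹ * (g * h * g⁻¹) * g = h := by group
      rw [this]; exact hh
    rw [Subgroup.mem_bot]
    exact hH1 s g hsN hsH
  refine ⟨M, inferInstance, inferInstance, instAct, inferInstance, inferInstance, inferInstance,
    instCS, (fun x => (x : Y × Z).1), Fintype.card Z, Fintype.card_pos,
    continuous_fst.comp continuous_subtype_val, ?_, fun g x => rfl, ?_, ?_, ?_, ?_⟩
  · -- surjective
    intro y
    obtain ⟨z, hz⟩ := hMsurj y
    exact ⟨⟨(y, z), hz⟩, rfl⟩
  · intro x hx
    exact hfree x hx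
  · -- fibers
    intro y _
    have hinj : Function.Injective
        (fun u : ((fun x : M => (x : Y × Z).1) ⁻¹' {y}) => ((u : M) : Y × Z).2) := by
      rintro ⟨⟨⟨y1, z1⟩, hm1⟩, hu1⟩ ⟨⟨⟨y2, z2⟩, hm2⟩, hu2⟩ h
      simp only [Set.mem_preimage, Set.mem_singleton_iff] at hu1 hu2
      simp only at h hu1 hu2
      subst hu1; subst hu2; subst h
      rfl
    haveI : Finite ((fun x : M => (x : Y × Z).1) ⁻¹' {y}) := Finite.of_injective _ hinj
    refine ⟨Set.finite_coe_iff.mp inferInstance, ?_⟩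
    calc Nat.card ((fun x : M => (x : Y × Z).1) ⁻¹' {y}) ≤ Nat.card Z :=
        Nat.card_le_card_of_injective _ hinj
      _ = Fintype.card Z := Nat.card_eq_fintype_card
  · -- minimal branch
    intro hmin
    have hdense : ∀ x : M, Dense (MulAction.orbit G x) := by
      intro x
      have himg : Subtype.val '' MulAction.orbit G x = MulAction.orbit G (x : Y × Z) := by
        ext p
        constructor
        · rintro ⟨q, ⟨g, rfl⟩, rfl⟩
          exact ⟨g, rfl⟩
        · rintro ⟨g, rfl⟩
          exact ⟨g • x, ⟨g, rfl⟩, rfl⟩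
      intro x'
      rw [closure_subtype, himg]
      exact hminM hmin _ x.2 _ x'.2
    refine ⟨hdense, ?_⟩
    rw [mem_residual_iff]
    refine ⟨Set.range (fun s : {s : N // (s : G) ≠ 1} =>
        {x : M | ((s : N) : G) • x ≠ x}), ?_, ?_, Set.countable_range _, ?_⟩
    · rintro t ⟨s, rfl⟩
      exact (isClosed_eq (continuous_const_smul _) continuous_id).isOpen_compl
    · rintro t ⟨s, rfl⟩
      by_contra hd
      rw [dense_iff_inter_open] at hd
      push_neg at hd
      obtain ⟨U, hUo, hUne, hUf⟩ := hd
      have hfix : ∀ x ∈ U, ((s : N) : G) • x = x := by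
        intro x hx
        by_contra h
        exact Set.eq_empty_iff_forall_notMem.mp hUf x ⟨hx, h⟩
      obtain ⟨y₁, hy₁⟩ := hne
      obtain ⟨z₁, hz₁⟩ := hMsurj y₁
      have hx₁ : MulAction.stabilizer G (⟨(y₁, z₁), hz₁⟩ : M) = ⊥ :=
        hfree ⟨(y₁, z₁), hz₁⟩ hy₁
      have hcover : (Set.univ : Set M) ⊆ ⋃ g : G, g • U := by
        intro x _
        obtain ⟨p, hpU, g, hg⟩ := (hdense x).inter_open_nonempty U hUo hUne
        have hg' : g • x = p := hg
        refine Set.mem_iUnion.mpr ⟨g⁻¹, ?_⟩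
        rw [Set.mem_smul_set_iff_inv_smul_mem, inv_inv, hg']
        exact hpU
      obtain ⟨F, hF⟩ := isCompact_univ.elim_finite_subcover (fun g : G => g • U)
        (fun g => hUo.smul g) hcover
      have hx₁' := hF (Set.mem_univ (⟨(y₁, z₁), hz₁⟩ : M))
      obtain ⟨g, _, hg⟩ := Set.mem_iUnion₂.mp hx₁'
      have hmem : g⁻¹ • (⟨(y₁, z₁), hz₁⟩ : M) ∈ U := Set.mem_smul_set_iff_inv_smul_mem.mp hg
      have h2 := hfix _ hmem
      have h3 : (g * ((s : N) : G) * g⁻¹) • (⟨(y₁, z₁), hz₁⟩ : M) = ⟨(y₁, z₁), hz₁⟩ := by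
        rw [mul_smul, mul_smul, h2, smul_inv_smul]
      have h4 : g * ((s : N) : G) * g⁻¹ ∈ MulAction.stabilizer G (⟨(y₁, z₁), hz₁⟩ : M) := h3
      rw [hx₁, Subgroup.mem_bot] at h4
      apply s.2
      calc ((s : N) : G) = g⁻¹ * (g * ((s : N) : G) * g⁻¹) * g := by group
        _ = 1 := by rw [h4]; group
    · intro x hx
      simp only [Set.mem_setOf_eq]
      rw [eq_bot_iff]
      intro g' hg'
      rw [Subgroup.mem_bot]
      by_contra hg'1
      have hgx : g' • x = x := hg'
      have h' := congrArg Subtype.val hgx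
      rw [hsmul_val] at h'
      have hz : g' • (x : Y × Z).2 = (x : Y × Z).2 := congrArg Prod.snd h'
      have hgN : g' ∈ N := (hstabZ g' _).mp hz
      have := hx _ (Set.mem_range_self (⟨⟨g', hgN⟩, hg'1⟩ : {s : N // (s : G) ≠ 1}))
      exact this hgx
  · -- measure branch
    intro μ hprob hμinv _ hμYH
    haveI := hprob
    have hmapμ : ∀ g : G, Measure.map (fun y : Y => g • y) μ = μ := by
      intro g
      ext s hs
      rw [Measure.map_apply (continuous_const_smul g).measurable hs]
      rw [Set.preimage_smul g s, hμinv g⁻¹ s]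
    set Sw : Z → Set Y := fun w => {y : Y | (y, w) ∈ M} with hSwdef
    have hSwm : ∀ w, MeasurableSet (Sw w) :=
      fun w => (hMcl.preimage (continuous_id.prodMk continuous_const)).measurableSet
    set cnt : Y → ℝ≥0∞ := fun y => ∑ w : Z, if (y, w) ∈ M then 1 else 0 with hcntdef
    have hcntm : Measurable cnt :=
      Finset.measurable_sum _ (fun w _ => Measurable.ite (hSwm w) measurable_const measurable_const)
    have hcnt_ne_top : ∀ y, cnt y ≠ ⊤ := by
      intro y
      refine (lt_of_le_of_lt (Finset.sum_le_card_nsmul _ _ 1 ?_) ?_).ne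
      · intro w _
        split <;> simp
      · simp only [nsmul_eq_mul, mul_one]
        exact ENNReal.natCast_lt_top _
    have hcnt_pos : ∀ y, cnt y ≠ 0 := by
      intro y
      obtain ⟨z, hz⟩ := hMsurj y
      intro h0
      have := Finset.sum_eq_zero_iff.mp h0 z (Finset.mem_univ z)
      rw [if_pos hz] at this
      exact one_ne_zero this
    set f : Z → Y → ℝ≥0∞ := fun w => (Sw w).indicator (fun y => (cnt y)⁻¹) with hfdef
    have hfm : ∀ w, Measurable (f w) := fun w => (hcntm.inv).indicator (hSwm w)
    have hfval : ∀ w y, f w y = if (y, w) ∈ M then (cnt y)⁻¹ else 0 := by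
      intro w y
      simp [hfdef, Set.indicator_apply, hSwdef]
    have hfsum : ∀ y, ∑ w : Z, f w y = 1 := by
      intro y
      have h1 : ∀ w : Z, f w y = (if (y, w) ∈ M then 1 else 0) * (cnt y)⁻¹ := by
        intro w
        rw [hfval]
        split <;> simp
      rw [Finset.sum_congr rfl (fun w _ => h1 w), ← Finset.sum_mul]
      exact ENNReal.mul_inv_cancel (hcnt_pos y) (hcnt_ne_top y)
    set ι : Z → Y → Y × Z := fun w y => (y, w) with hιdef
    have hιm : ∀ w, Measurable (ι w) := fun w => measurable_id.prodMk measurable_const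
    set ν₀ : Measure (Y × Z) := ∑ w : Z, Measure.map (ι w) (μ.withDensity (f w)) with hν₀def
    have hν₀app : ∀ s : Set (Y × Z), MeasurableSet s →
        ν₀ s = ∑ w : Z, ∫⁻ y in (ι w) ⁻¹' s, f w y ∂μ := by
      intro s hs
      rw [hν₀def, Measure.finset_sum_apply]
      exact Finset.sum_congr rfl fun w _ => by
        rw [Measure.map_apply (hιm w) hs, withDensity_apply _ ((hιm w) hs)]
    have hν₀univ : ν₀ Set.univ = 1 := by
      rw [hν₀app _ MeasurableSet.univ]
      simp only [Set.preimage_univ, Measure.restrict_univ]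
      rw [← lintegral_finset_sum _ (fun w _ => hfm w)]
      simp only [hfsum]
      simp
    have hν₀Mc : ν₀ Mᶜ = 0 := by
      rw [hν₀app _ hMmeas.compl]
      refine Finset.sum_eq_zero fun w _ => ?_
      have hpre : (ι w) ⁻¹' Mᶜ = (Sw w)ᶜ := rfl
      rw [hpre]
      calc ∫⁻ y in (Sw w)ᶜ, f w y ∂μ = ∫⁻ _ in (Sw w)ᶜ, 0 ∂μ :=
          setLIntegral_congr_fun (hSwm w).compl
            (fun y hy => Set.indicator_of_notMem hy _)
        _ = 0 := by simp
    haveI hν₀prob : IsProbabilityMeasure ν₀ := ⟨hν₀univ⟩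
    have hν₀M : ν₀ M = 1 := by
      have h := measure_compl (μ := ν₀) hMmeas.compl (measure_ne_top _ _)
      rw [compl_compl, hν₀Mc, measure_univ] at h
      simpa using h
    have hemb : MeasurableEmbedding (Subtype.val : M → Y × Z) :=
      MeasurableEmbedding.subtype_coe hMmeas
    set ν : Measure M := Measure.comap Subtype.val ν₀ with hνdef
    have hνapp : ∀ s : Set M, ν s = ν₀ (Subtype.val '' s) := fun s => hemb.comap_apply ν₀ s
    haveI hνprob : IsProbabilityMeasure ν :=
      ⟨by rw [hνapp, Set.image_univ, Subtype.range_coe, hν₀M]⟩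
    have hmapval : Measure.map Subtype.val ν = ν₀ := by
      rw [hνdef, hemb.map_comap, Subtype.range_coe]
      exact Measure.restrict_eq_self_of_ae_mem (mem_ae_iff.mpr hν₀Mc)
    have hmapfst : Measure.map Prod.fst ν₀ = μ := by
      ext s hs
      rw [Measure.map_apply measurable_fst hs, hν₀app _ (measurable_fst hs)]
      have hpre : ∀ w : Z, (ι w) ⁻¹' (Prod.fst ⁻¹' s) = s := fun w => rfl
      simp_rw [hpre]
      rw [← lintegral_finset_sum _ (fun w _ => hfm w)]
      simp only [hfsum]
      simp [hs]
    have hmapπ : Measure.map (fun x : M => (x : Y × Z).1) ν = μ := by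
      have hcomp : (fun x : M => (x : Y × Z).1) = Prod.fst ∘ (Subtype.val : M → Y × Z) := rfl
      rw [hcomp, ← Measure.map_map measurable_fst hemb.measurable, hmapval, hmapfst]
    -- invariance of ν₀
    have hMiff : ∀ (g : G) (p : Y × Z), p ∈ M ↔ g • p ∈ M := by
      intro g p
      refine ⟨hMinv g p, fun h => ?_⟩
      have := hMinv g⁻¹ _ h
      rwa [inv_smul_smul] at this
    have hcnt_inv : ∀ (g : G) (y : Y), cnt (g • y) = cnt y := by
      intro g y
      refine (Fintype.sum_equiv (MulAction.toPerm g)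
        (fun w => if (y, w) ∈ M then (1:ℝ≥0∞) else 0)
        (fun w => if (g • y, w) ∈ M then (1:ℝ≥0∞) else 0) ?_).symm
      intro w
      show (if (y, w) ∈ M then (1:ℝ≥0∞) else 0)
          = if (g • y, MulAction.toPerm g w) ∈ M then 1 else 0
      have hpt : (g • y, MulAction.toPerm g w) = g • (y, w) := rfl
      rw [hpt]
      exact if_congr (hMiff g (y, w)) rfl rfl
    have hf_inv : ∀ (g : G) (w : Z) (y : Y), f w y = f (g • w) (g • y) := by
      intro g w y
      rw [hfval, hfval, hcnt_inv g y]
      have : (g • y, g • w) = g • (y, w) := rfl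
      rw [this]
      exact if_congr (hMiff g (y, w)) rfl rfl
    have hν₀inv : ∀ (g : G) (s : Set (Y × Z)), MeasurableSet s →
        ν₀ ((fun p : Y × Z => g • p) ⁻¹' s) = ν₀ s := by
      intro g s hs
      have hsm' : MeasurableSet ((fun p : Y × Z => g • p) ⁻¹' s) :=
        (continuous_const_smul g).measurable hs
      rw [hν₀app _ hsm', hν₀app _ hs]
      have key : ∀ w : Z, ∫⁻ y in (ι w) ⁻¹' ((fun p : Y × Z => g • p) ⁻¹' s), f w y ∂μ
          = ∫⁻ y in (ι (g • w)) ⁻¹' s, f (g • w) y ∂μ := by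
        intro w
        have hAm : MeasurableSet ((ι (g • w)) ⁻¹' s) := (hιm _) hs
        have hpre : (ι w) ⁻¹' ((fun p : Y × Z => g • p) ⁻¹' s)
            = (fun y : Y => g • y) ⁻¹' ((ι (g • w)) ⁻¹' s) := rfl
        rw [hpre]
        have hτm : Measurable (fun y : Y => g • y) := (continuous_const_smul g).measurable
        calc ∫⁻ y in (fun y : Y => g • y) ⁻¹' ((ι (g • w)) ⁻¹' s), f w y ∂μ
            = ∫⁻ y, (((fun y : Y => g • y) ⁻¹' ((ι (g • w)) ⁻¹' s)).indicator (f w)) y ∂μ :=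
              (lintegral_indicator (hτm hAm) _).symm
          _ = ∫⁻ y, ((ι (g • w)) ⁻¹' s).indicator (f (g • w)) (g • y) ∂μ := by
              refine lintegral_congr fun y => ?_
              simp only [Set.indicator_apply, Set.mem_preimage]
              exact if_congr Iff.rfl (hf_inv g w y) rfl
          _ = ∫⁻ p, ((ι (g • w)) ⁻¹' s).indicator (f (g • w)) p
                ∂(Measure.map (fun y : Y => g • y) μ) :=
              (lintegral_map ((hfm _).indicator hAm) hτm).symm
          _ = ∫⁻ p in (ι (g • w)) ⁻¹' s, f (g • w) p ∂μ := by
              rw [hmapμ g, lintegral_indicator hAm]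
      calc ∑ w : Z, ∫⁻ y in (ι w) ⁻¹' ((fun p : Y × Z => g • p) ⁻¹' s), f w y ∂μ
          = ∑ w : Z, ∫⁻ y in (ι (g • w)) ⁻¹' s, f (g • w) y ∂μ :=
            Finset.sum_congr rfl fun w _ => key w
        _ = ∑ w : Z, ∫⁻ y in (ι w) ⁻¹' s, f w y ∂μ :=
            Fintype.sum_equiv (MulAction.toPerm g)
              (fun w => ∫⁻ y in (ι (g • w)) ⁻¹' s, f (g • w) y ∂μ)
              (fun w => ∫⁻ y in (ι w) ⁻¹' s, f w y ∂μ) (fun w => rfl)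
    have hval_smul_img : ∀ (g : G) (s : Set M),
        Subtype.val '' ((fun x : M => g • x) ⁻¹' s)
          = M ∩ ((fun p : Y × Z => g • p) ⁻¹' (Subtype.val '' s)) := by
      intro g s
      ext p
      constructor
      · rintro ⟨x, hx, rfl⟩
        exact ⟨x.2, ⟨g • x, hx, rfl⟩⟩
      · rintro ⟨hpM, q, hq, hqe⟩
        refine ⟨⟨p, hpM⟩, ?_, rfl⟩
        show g • (⟨p, hpM⟩ : M) ∈ s
        have : g • (⟨p, hpM⟩ : M) = q := Subtype.ext (by rw [hsmul_val]; exact hqe.symm)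
        rwa [this]
    have hνmap : ∀ g : G, Measure.map (fun x : M => g • x) ν = ν := by
      intro g
      ext s hs
      have hsm : Measurable (fun x : M => g • x) := (continuous_const_smul g).measurable
      rw [Measure.map_apply hsm hs, hνapp, hνapp, hval_smul_img]
      have hvm : MeasurableSet (Subtype.val '' s) := hemb.measurableSet_image.mpr hs
      have h1 : ν₀ (M ∩ ((fun p : Y × Z => g • p) ⁻¹' (Subtype.val '' s)))
          = ν₀ ((fun p : Y × Z => g • p) ⁻¹' (Subtype.val '' s)) := by
        apply measure_congr
        rw [Filter.eventuallyEq_set]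
        filter_upwards [mem_ae_iff.mpr hν₀Mc] with p hp
        simp [hp]
      rw [h1, hν₀inv g _ hvm]
    have hνinv : ∀ (g : G) (A : Set M), ν (g • A) = ν A := by
      intro g A
      have hpre : (fun x : M => g⁻¹ • x) ⁻¹' A = g • A := by
        rw [Set.preimage_smul g⁻¹ A, inv_inv]
      have e : M ≃ᵐ M := (Homeomorph.smul (g⁻¹ : G) (α := M)).toMeasurableEquiv
      have hec : ⇑((Homeomorph.smul (g⁻¹ : G) (α := M)).toMeasurableEquiv)
          = fun x : M => g⁻¹ • x := rfl
      calc ν (g • A)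
          = ν (⇑((Homeomorph.smul (g⁻¹ : G) (α := M)).toMeasurableEquiv) ⁻¹' A) := by
            rw [hec, hpre]
        _ = Measure.map (⇑((Homeomorph.smul (g⁻¹ : G) (α := M)).toMeasurableEquiv)) ν A :=
            (MeasurableEquiv.map_apply _ A).symm
        _ = ν A := by rw [hec, hνmap g⁻¹]
    -- essential freeness
    set B : Set Y := ⋃ s : {s : N // (s : G) ≠ 1}, {y : Y | ((s : N) : G) • y = y} with hBdef
    have hBm : MeasurableSet B := MeasurableSet.iUnion fun s =>
      (isClosed_eq (continuous_const_smul _) continuous_id).measurableSet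
    have hBYH : ∀ y ∈ setYH G H, y ∉ B := by
      intro y hy hyB
      obtain ⟨s, hsy⟩ := Set.mem_iUnion.mp hyB
      obtain ⟨g, hg⟩ := hy
      have hmem : ((s : N) : G) ∈ MulAction.stabilizer G y := hsy
      rw [hg] at hmem
      obtain ⟨h, hh, hch⟩ := hmem
      have hH : g⁻¹ * ((s : N) : G) * g ∈ H := by
        have hch' : g * h * g⁻¹ = ((s : N) : G) := hch
        rw [← hch']
        have : g⁻¹ * (g * h * g⁻¹) * g = h := by group
        rw [this]; exact hh
      exact s.2 (hH1 _ g (s : N).2 hH)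
    have hμB : μ B = 0 := by
      have h1 : μ Bᶜ = 1 := le_antisymm prob_le_one
        (by rw [← hμYH]; exact measure_mono (fun y hy => hBYH y hy))
      have h2 := measure_add_measure_compl (μ := μ) hBm
      rw [h1, measure_univ] at h2
      by_contra hB0
      exact hB0 (by
        have h3 : μ B + 1 = 0 + 1 := by rw [h2, zero_add]
        exact WithTop.add_right_cancel ENNReal.one_ne_top h3)
    have hEc : {x : M | MulAction.stabilizer G x = ⊥}ᶜ ⊆ (fun x : M => (x : Y × Z).1) ⁻¹' B := by
      intro x hx
      simp only [Set.mem_compl_iff, Set.mem_setOf_eq] at hx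
      obtain ⟨g', hg'mem, hg'ne⟩ : ∃ g', g' ∈ MulAction.stabilizer G x ∧ g' ≠ 1 := by
        by_contra hcon
        push_neg at hcon
        apply hx
        rw [eq_bot_iff]
        intro g' hg'
        rw [Subgroup.mem_bot]
        exact hcon g' hg'
      have hgx : g' • x = x := hg'mem
      have h' := congrArg Subtype.val hgx
      rw [hsmul_val] at h'
      have hz : g' • (x : Y × Z).2 = (x : Y × Z).2 := congrArg Prod.snd h'
      have hy : g' • (x : Y × Z).1 = (x : Y × Z).1 := congrArg Prod.fst h'
      have hgN : g' ∈ N := (hstabZ g' _).mp hz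
      exact Set.mem_iUnion.mpr ⟨⟨⟨g', hgN⟩, hg'ne⟩, hy⟩
    have hνEc : ν ({x : M | MulAction.stabilizer G x = ⊥}ᶜ) = 0 := by
      have h2 : ν ((fun x : M => (x : Y × Z).1) ⁻¹' B) = μ B := by
        have hπm : Measurable (fun x : M => (x : Y × Z).1) :=
          (continuous_fst.comp continuous_subtype_val).measurable
        rw [← hmapπ, Measure.map_apply hπm hBm]
      exact le_antisymm (by rw [← hμB, ← h2]; exact measure_mono hEc) zero_le
    have hνE : ν {x : M | MulAction.stabilizer G x = ⊥} = 1 := by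
      have h3 : (1 : ℝ≥0∞) ≤ ν {x : M | MulAction.stabilizer G x = ⊥}
          + ν ({x : M | MulAction.stabilizer G x = ⊥}ᶜ) := by
        rw [← measure_univ (μ := ν)]
        exact (measure_mono (by rw [Set.union_compl_self])).trans
          (measure_union_le _ _)
      rw [hνEc, add_zero] at h3
      exact le_antisymm prob_le_one h3
    exact ⟨ν, hνprob, hνinv, hmapπ, hνE⟩

theorem build (N H : Subgroup G)
    (hstabZ : ∀ (g : G) (z : Z), g • z = z ↔ g ∈ N)
    (hH1 : ∀ s g : G, s ∈ N → g⁻¹ * s * g ∈ H → s = 1)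
    (hne : (setYH G H : Set Y).Nonempty) :
    ∃ (X : Type u) (_ : TopologicalSpace X) (_ : MeasurableSpace X) (_ : MulAction G X),
      CompactSpace X ∧ T2Space X ∧ BorelSpace X ∧ ContinuousConstSMul G X ∧
      ∃ (π : X → Y) (m : ℕ),
        1 ≤ m ∧
        Continuous π ∧ Function.Surjective π ∧
        (∀ (g : G) (x : X), π (g • x) = g • π x) ∧
        π ⁻¹' (setYH G H : Set Y) ⊆ {x : X | MulAction.stabilizer G x = ⊥} ∧
        (∀ y ∈ (setYH G H : Set Y), (π ⁻¹' {y}).Finite ∧ Nat.card (π ⁻¹' {y}) ≤ m) ∧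
        ((∀ y : Y, Dense (MulAction.orbit G y)) →
          (∀ x : X, Dense (MulAction.orbit G x)) ∧
          {x : X | MulAction.stabilizer G x = ⊥} ∈ residual X) ∧
        (∀ μ : Measure Y, IsProbabilityMeasure μ →
          (∀ (g : G) (A : Set Y), μ (g • A) = μ A) →
          (∀ A : Set Y, MeasurableSet A → (∀ g : G, g • A = A) → μ A = 0 ∨ μ A = 1) →
          μ (setYH G H : Set Y) = 1 →
          ∃ ν : Measure X, IsProbabilityMeasure ν ∧
            (∀ (g : G) (A : Set X), ν (g • A) = ν A) ∧
            Measure.map π ν = μ ∧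
            ν {x : X | MulAction.stabilizer G x = ⊥} = 1) := by
  classical
  haveI : ContinuousConstSMul G Z := ⟨fun g => continuous_of_discreteTopology⟩
  by_cases hmin : ∀ y : Y, Dense (MulAction.orbit G y)
  case neg =>
    exact core N H Set.univ isClosed_univ (by simp)
      (fun y => ⟨Classical.arbitrary Z, trivial⟩) hstabZ hH1 hne (fun h => absurd h hmin)
  case pos =>
    obtain ⟨y₀, -⟩ := id hne
    set S := {C : Set (Y × Z) | C.Nonempty ∧ IsClosed C ∧ ∀ (g : G), ∀ p ∈ C, g • p ∈ C}
      with hSdef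
    have huniv : (Set.univ : Set (Y × Z)) ∈ S :=
      ⟨⟨(y₀, Classical.arbitrary Z), trivial⟩, isClosed_univ, by simp⟩
    have hchain : ∀ c ⊆ S, IsChain (· ⊆ ·) c → c.Nonempty →
        ∃ lb ∈ S, ∀ s ∈ c, lb ⊆ s := by
      intro c hcS hch hcne
      refine ⟨⋂₀ c, ⟨?_, isClosed_sInter (fun t ht => (hcS ht).2.1), ?_⟩,
        fun s hs => Set.sInter_subset_of_mem hs⟩
      · haveI : Nonempty c := hcne.to_subtype
        have hdir : Directed (· ⊇ ·) (fun t : c => (t : Set (Y × Z))) := by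
          intro a b
          rcases eq_or_ne a b with h | h
          · exact ⟨a, subset_rfl, h ▸ subset_rfl⟩
          · rcases hch a.2 b.2 (fun hv => h (Subtype.ext hv)) with h' | h'
            · exact ⟨a, subset_rfl, h'⟩
            · exact ⟨b, h', subset_rfl⟩
        have hint := IsCompact.nonempty_iInter_of_directed_nonempty_isCompact_isClosed
          (fun t : c => (t : Set (Y × Z))) hdir (fun t => (hcS t.2).1)
          (fun t => (hcS t.2).2.1.isCompact) (fun t => (hcS t.2).2.1)
        rwa [← Set.sInter_eq_iInter] at hint
      · intro g p hp
        exact Set.mem_sInter.mpr fun t ht => (hcS ht).2.2 g p (Set.mem_sInter.mp hp t ht)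
    obtain ⟨M, -, hMmin⟩ := zorn_superset_nonempty S hchain Set.univ huniv
    obtain ⟨hMne, hMcl, hMinv⟩ := hMmin.1
    have hMinv' : ∀ (g : G), ∀ p ∈ M, g • p ∈ M := hMinv
    -- fst image is everything
    have hMsurj : ∀ y : Y, ∃ z : Z, (y, z) ∈ M := by
      have hFcl : IsClosed (Prod.fst '' M) := (hMcl.isCompact.image continuous_fst).isClosed
      have hFinv : ∀ y ∈ Prod.fst '' M, MulAction.orbit G y ⊆ Prod.fst '' M := by
        rintro y ⟨p, hp, rfl⟩ r hr
        obtain ⟨g, rfl⟩ := MulAction.mem_orbit_iff.mp hr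
        exact ⟨g • p, hMinv g p hp, rfl⟩
      have hF : Prod.fst '' M = Set.univ := by
        obtain ⟨p₀, hp₀⟩ := hMne
        have h1 : MulAction.orbit G p₀.1 ⊆ Prod.fst '' M :=
          hFinv p₀.1 ⟨p₀, hp₀, rfl⟩
        have h2 : closure (MulAction.orbit G p₀.1) ⊆ Prod.fst '' M :=
          closure_minimal h1 hFcl
        have h3 := (hmin p₀.1).closure_eq
        exact Set.eq_univ_of_univ_subset (h3 ▸ h2)
      intro y
      have : y ∈ Prod.fst '' M := hF ▸ Set.mem_univ y
      obtain ⟨p, hp, hpy⟩ := this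
      exact ⟨p.2, by rwa [← hpy, Prod.mk.eta]⟩
    have hminM : (∀ y : Y, Dense (MulAction.orbit G y)) →
        ∀ p ∈ M, ∀ q ∈ M, q ∈ closure (MulAction.orbit G p) := by
      intro _ p hp q hq
      have horbM : MulAction.orbit G p ⊆ M := by
        rintro r ⟨g, rfl⟩
        exact hMinv g p hp
      have hCS : closure (MulAction.orbit G p) ∈ S := by
        refine ⟨⟨p, subset_closure (MulAction.mem_orbit_self p)⟩,
          isClosed_closure, ?_⟩
        intro g r hr
        have hmapsto : Set.MapsTo (fun q : Y × Z => g • q)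
            (MulAction.orbit G p) (MulAction.orbit G p) := by
          intro r' hr'
          obtain ⟨g', rfl⟩ := MulAction.mem_orbit_iff.mp hr'
          show g • g' • p ∈ MulAction.orbit G p
          rw [← mul_smul]
          exact MulAction.mem_orbit p (g * g')
        exact hmapsto.closure (continuous_const_smul g) hr
      have hCM : closure (MulAction.orbit G p) ⊆ M := closure_minimal horbM hMcl
      exact hMmin.2 hCS hCM hq
    exact core N H M hMcl hMinv' hMsurj hstabZ hH1 hne hminM

end Aux

theorem stmt17 {G : Type*} {Y : Type u} [Group G] [Countable G]
    [TopologicalSpace Y] [CompactSpace Y] [T2Space Y]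
    [MeasurableSpace Y] [BorelSpace Y]
    [MulAction G Y] [ContinuousConstSMul G Y]
    (H : Subgroup G) (hfin : (H : Set G).Finite) (hAN : (Subgroup.normalizer (H : Set G)).FiniteIndex)
    (hres : H ⊓ residualSubgroup G = ⊥)
    (hne : (setYH G H : Set Y).Nonempty) :
    ∃ (X : Type u) (_ : TopologicalSpace X) (_ : MeasurableSpace X) (_ : MulAction G X),
      CompactSpace X ∧ T2Space X ∧ BorelSpace X ∧ ContinuousConstSMul G X ∧
      ∃ (π : X → Y) (m : ℕ),
        1 ≤ m ∧
        Continuous π ∧ Function.Surjective π ∧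
        (∀ (g : G) (x : X), π (g • x) = g • π x) ∧
        π ⁻¹' (setYH G H : Set Y) ⊆ {x : X | MulAction.stabilizer G x = ⊥} ∧
        (∀ y ∈ (setYH G H : Set Y), (π ⁻¹' {y}).Finite ∧ Nat.card (π ⁻¹' {y}) ≤ m) ∧
        ((∀ y : Y, Dense (MulAction.orbit G y)) →
          (∀ x : X, Dense (MulAction.orbit G x)) ∧
          {x : X | MulAction.stabilizer G x = ⊥} ∈ residual X) ∧
        (∀ μ : Measure Y, IsProbabilityMeasure μ →
          (∀ (g : G) (A : Set Y), μ (g • A) = μ A) →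
          (∀ A : Set Y, MeasurableSet A → (∀ g : G, g • A = A) → μ A = 0 ∨ μ A = 1) →
          μ (setYH G H : Set Y) = 1 →
          ∃ ν : Measure X, IsProbabilityMeasure ν ∧
            (∀ (g : G) (A : Set X), ν (g • A) = ν A) ∧
            Measure.map π ν = μ ∧
            ν {x : X | MulAction.stabilizer G x = ⊥} = 1) := by
  classical
  haveI : Finite H := hfin.to_subtype
  have hKex : ∀ h : H, ∃ K : Subgroup G, K.FiniteIndex ∧ ((h : G) ≠ 1 → (h : G) ∉ K) := by
    intro h
    by_cases h1 : (h : G) = 1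
    · exact ⟨⊤, inferInstance, fun hn => absurd h1 hn⟩
    · have hnr : (h : G) ∉ residualSubgroup G := by
        intro hmem
        have : (h : G) ∈ H ⊓ residualSubgroup G := ⟨h.2, hmem⟩
        rw [hres] at this
        exact h1 (Subgroup.mem_bot.mp this)
      simp only [residualSubgroup, Subgroup.mem_iInf] at hnr
      push_neg at hnr
      obtain ⟨K, hKfi, hK⟩ := hnr
      exact ⟨K, hKfi, fun _ => hK⟩
  choose K hKfi hK using hKex
  set N₀ : Subgroup G := ⨅ h : H, K h with hN₀def
  haveI : N₀.FiniteIndex := Subgroup.finiteIndex_iInf hKfi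
  set N : Subgroup G := N₀.normalCore with hNdef
  haveI hNnorm : N.Normal := Subgroup.normalCore_normal N₀
  haveI : N.FiniteIndex := inferInstance
  have hN1 : ∀ x ∈ H, x ∈ N → x = 1 := by
    intro x hx hxN
    by_contra hx1
    have h1 : x ∈ N₀ := Subgroup.normalCore_le N₀ hxN
    have h2 : x ∈ K ⟨x, hx⟩ := Subgroup.mem_iInf.mp h1 ⟨x, hx⟩
    exact hK ⟨x, hx⟩ hx1 h2
  have hH1 : ∀ s g : G, s ∈ N → g⁻¹ * s * g ∈ H → s = 1 := by
    intro s g hsN hH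
    have hsN' : g⁻¹ * s * g ∈ N := by
      have := hNnorm.conj_mem s hsN g⁻¹
      simpa using this
    have h1 : g⁻¹ * s * g = 1 := hN1 _ hH hsN'
    calc s = g * (g⁻¹ * s * g) * g⁻¹ := by group
      _ = 1 := by rw [h1]; group
  haveI : Finite (G ⧸ N) := inferInstance
  letI : Fintype (G ⧸ N) := Fintype.ofFinite _
  letI Z : Type u := ULift.{u} (Fin (Fintype.card (G ⧸ N)))
  letI eZ : Z ≃ G ⧸ N := Equiv.ulift.trans (Fintype.equivFin (G ⧸ N)).symm
  letI : MulAction G Z := Equiv.mulAction G eZ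
  haveI : Nonempty Z := eZ.nonempty
  letI : MeasurableSpace Z := ⊤
  haveI : BorelSpace Z := ⟨borel_eq_top_of_discrete.symm⟩
  have hquot : ∀ (g : G) (q : G ⧸ N), g • q = q ↔ g ∈ N := by
    intro g q
    induction q using QuotientGroup.induction_on with
    | H c =>
      have h1 : g • (↑c : G ⧸ N) = ↑(g * c) := rfl
      rw [h1, QuotientGroup.eq]
      constructor
      · intro hmem
        have h2 : (g * c)⁻¹ * c = c⁻¹ * g⁻¹ * c := by group
        rw [h2] at hmem
        have h3 := hNnorm.conj_mem _ hmem c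
        have h4 : c * (c⁻¹ * g⁻¹ * c) * c⁻¹ = g⁻¹ := by group
        rw [h4] at h3
        exact (Subgroup.inv_mem_iff N).mp h3
      · intro hmem
        have h3 := hNnorm.conj_mem _ ((Subgroup.inv_mem_iff N).mpr hmem) c⁻¹
        have h4 : c⁻¹ * g⁻¹ * c⁻¹⁻¹ = (g * c)⁻¹ * c := by group
        rwa [h4] at h3
  have hstabZ : ∀ (g : G) (z : Z), g • z = z ↔ g ∈ N := by
    intro g z
    have h1 : g • z = eZ.symm (g • eZ z) := rfl
    rw [h1, ← hquot g (eZ z)]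
    constructor
    · intro h
      have := congrArg eZ h
      rwa [Equiv.apply_symm_apply] at this
    · intro h
      rw [h, Equiv.symm_apply_apply]
  exact build N H hstabZ hH1 hne
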